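/- Let p, q be three times continuously differentiable real functions on an interval (a,b) and let f be a solution of f'' + p·f' + q·f = 0 on (a,b) (so f is five times differentiable). Then w(f)' + p·w(f) = (p'·f' + q'·f)·( (p'' + q')·f'·f + q''·f² + p'·(f')² ) − A'·v(f) on (a,b), where A = (p'' − p'·p + 2q')·f' + (−2p'·q + q'' + p·q')·f. In the case q' ≡ 0 this simplifies to w(f)' + p·w(f) = p'·(f')²·(p''·f + p'·f') − A'·v(f). -/

import Mathlib

/-- v h = (deriv h)^2 - (second derivative of h) * h. -/
noncomputable def v (f : ℝ → ℝ) (x : ℝ) : ℝ := (deriv f x) ^ 2 - deriv^[2] f x * f x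

/-- Determinant of the 3x3 Hankel-Wronskian matrix of h (rows of 2nd..4th derivatives). -/
noncomputable def w (f : ℝ → ℝ) (x : ℝ) : ℝ :=
  Matrix.det !![deriv^[2] f x, deriv f x, f x;
    deriv^[3] f x, deriv^[2] f x, deriv f x;
    deriv^[4] f x, deriv^[3] f x, deriv^[2] f x]

lemma aux_diff {s : Set ℝ} (hs : IsOpen s) : ∀ (k n : ℕ) (g : ℝ → ℝ), k + 1 ≤ n →
    ContDiffOn ℝ n g s → DifferentiableOn ℝ (deriv^[k] g) s := by
  intro k
  induction k with
  | zero =>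
    intro n g hn hg
    exact hg.differentiableOn (by exact_mod_cast (by omega : n ≠ 0))
  | succ k ih =>
    intro n g hn hg
    have h1 : ContDiffOn ℝ (n - 1 : ℕ) (deriv g) s := by
      apply hg.deriv_of_isOpen hs
      exact_mod_cast (by omega : (n - 1) + 1 ≤ n)
    have h2 := ih (n - 1) (deriv g) (by omega) h1
    simpa [Function.iterate_succ_apply] using h2

theorem stmt_14 (a b : ℝ) (hab : a < b) (p q f A : ℝ → ℝ)
    (hp : ContDiffOn ℝ 3 p (Set.Ioo a b)) (hq : ContDiffOn ℝ 3 q (Set.Ioo a b))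
    (hf : ContDiffOn ℝ 5 f (Set.Ioo a b))
    (hode : ∀ x ∈ Set.Ioo a b, deriv^[2] f x + p x * deriv f x + q x * f x = 0)
    (hA : A = fun y => (deriv^[2] p y - deriv p y * p y + 2 * deriv q y) * deriv f y +
      (-2 * deriv p y * q y + deriv^[2] q y + p y * deriv q y) * f y) :
    (∀ x ∈ Set.Ioo a b,
      deriv (w f) x + p x * w f x =
        (deriv p x * deriv f x + deriv q x * f x) *
          ((deriv^[2] p x + deriv q x) * deriv f x * f x + deriv^[2] q x * (f x) ^ 2 +
            deriv p x * (deriv f x) ^ 2) - deriv A x * v f x) ∧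
    ((∀ x ∈ Set.Ioo a b, deriv q x = 0) →
      ∀ x ∈ Set.Ioo a b,
        deriv (w f) x + p x * w f x =
          deriv p x * (deriv f x) ^ 2 * (deriv^[2] p x * f x + deriv p x * deriv f x) -
            deriv A x * v f x) := by
  have hs : IsOpen (Set.Ioo a b) := isOpen_Ioo
  -- iterate unfoldings
  have ip1 : deriv^[1] p = deriv p := congrFun (Function.iterate_one deriv) p
  have iq1 : deriv^[1] q = deriv q := congrFun (Function.iterate_one deriv) q
  have if1 : deriv^[1] f = deriv f := congrFun (Function.iterate_one deriv) f
  have ip2 : deriv^[2] p = deriv (deriv p) := by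
    rw [show (2:ℕ) = 1 + 1 from rfl, Function.iterate_succ_apply' deriv 1 p, ip1]
  have iq2 : deriv^[2] q = deriv (deriv q) := by
    rw [show (2:ℕ) = 1 + 1 from rfl, Function.iterate_succ_apply' deriv 1 q, iq1]
  have if2 : deriv^[2] f = deriv (deriv f) := by
    rw [show (2:ℕ) = 1 + 1 from rfl, Function.iterate_succ_apply' deriv 1 f, if1]
  have ip3 : deriv^[3] p = deriv (deriv^[2] p) := Function.iterate_succ_apply' deriv 2 p
  have iq3 : deriv^[3] q = deriv (deriv^[2] q) := Function.iterate_succ_apply' deriv 2 q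
  have if3 : deriv^[3] f = deriv (deriv^[2] f) := Function.iterate_succ_apply' deriv 2 f
  have if4 : deriv^[4] f = deriv (deriv^[3] f) := Function.iterate_succ_apply' deriv 3 f
  -- differentiability
  have Dp0 : DifferentiableOn ℝ p (Set.Ioo a b) := by
    simpa using aux_diff hs 0 3 p (by norm_num) hp
  have Dp1 : DifferentiableOn ℝ (deriv p) (Set.Ioo a b) := by
    simpa [ip1] using aux_diff hs 1 3 p (by norm_num) hp
  have Dp2 : DifferentiableOn ℝ (deriv^[2] p) (Set.Ioo a b) :=
    aux_diff hs 2 3 p (by norm_num) hp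
  have Dq0 : DifferentiableOn ℝ q (Set.Ioo a b) := by
    simpa using aux_diff hs 0 3 q (by norm_num) hq
  have Dq1 : DifferentiableOn ℝ (deriv q) (Set.Ioo a b) := by
    simpa [iq1] using aux_diff hs 1 3 q (by norm_num) hq
  have Dq2 : DifferentiableOn ℝ (deriv^[2] q) (Set.Ioo a b) :=
    aux_diff hs 2 3 q (by norm_num) hq
  have Df0 : DifferentiableOn ℝ f (Set.Ioo a b) := by
    simpa using aux_diff hs 0 5 f (by norm_num) hf
  have Df1 : DifferentiableOn ℝ (deriv f) (Set.Ioo a b) := by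
    simpa [if1] using aux_diff hs 1 5 f (by norm_num) hf
  have Df2 : DifferentiableOn ℝ (deriv^[2] f) (Set.Ioo a b) :=
    aux_diff hs 2 5 f (by norm_num) hf
  have Df3 : DifferentiableOn ℝ (deriv^[3] f) (Set.Ioo a b) :=
    aux_diff hs 3 5 f (by norm_num) hf
  have Df4 : DifferentiableOn ℝ (deriv^[4] f) (Set.Ioo a b) :=
    aux_diff hs 4 5 f (by norm_num) hf
  -- HasDerivAt facts at any point of the interval
  have HD : ∀ {g : ℝ → ℝ}, DifferentiableOn ℝ g (Set.Ioo a b) → ∀ {y}, y ∈ Set.Ioo a b →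
      HasDerivAt g (deriv g y) y := by
    intro g hg y hy
    exact ((hg _ hy).differentiableAt (hs.mem_nhds hy)).hasDerivAt
  -- pointwise ODE reductions
  have h2 : ∀ y ∈ Set.Ioo a b, deriv^[2] f y = -(p y * deriv f y + q y * f y) := by
    intro y hy; have := hode y hy; linarith
  have h3 : ∀ y ∈ Set.Ioo a b, deriv^[3] f y =
      -((deriv p y * deriv f y + p y * deriv^[2] f y) +
        (deriv q y * f y + q y * deriv f y)) := by
    intro y hy
    have hev : deriv^[2] f =ᶠ[nhds y] (fun z => -(p z * deriv f z + q z * f z)) :=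
      Filter.eventuallyEq_of_mem (hs.mem_nhds hy) (fun z hz => h2 z hz)
    have Hf1 : HasDerivAt (deriv f) (deriv^[2] f y) y := by
      rw [if2]; exact HD Df1 hy
    have H : HasDerivAt (fun z => -(p z * deriv f z + q z * f z))
        (-((deriv p y * deriv f y + p y * deriv^[2] f y) +
          (deriv q y * f y + q y * deriv f y))) y :=
      (((HD Dp0 hy).mul Hf1).add ((HD Dq0 hy).mul (HD Df0 hy))).neg
    rw [if3, hev.deriv_eq]
    exact H.deriv
  have h4 : ∀ y ∈ Set.Ioo a b, deriv^[4] f y =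
      -(((deriv^[2] p y * deriv f y + deriv p y * deriv^[2] f y) +
         (deriv p y * deriv^[2] f y + p y * deriv^[3] f y)) +
        ((deriv^[2] q y * f y + deriv q y * deriv f y) +
         (deriv q y * deriv f y + q y * deriv^[2] f y))) := by
    intro y hy
    have hev : deriv^[3] f =ᶠ[nhds y] (fun z =>
        -((deriv p z * deriv f z + p z * deriv^[2] f z) +
          (deriv q z * f z + q z * deriv f z))) :=
      Filter.eventuallyEq_of_mem (hs.mem_nhds hy) (fun z hz => h3 z hz)
    have Hf1 : HasDerivAt (deriv f) (deriv^[2] f y) y := by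
      rw [if2]; exact HD Df1 hy
    have Hf2 : HasDerivAt (deriv^[2] f) (deriv^[3] f y) y := by
      rw [if3]; exact HD Df2 hy
    have Hp1 : HasDerivAt (deriv p) (deriv^[2] p y) y := by
      rw [ip2]; exact HD Dp1 hy
    have Hq1 : HasDerivAt (deriv q) (deriv^[2] q y) y := by
      rw [iq2]; exact HD Dq1 hy
    have H : HasDerivAt (fun z =>
        -((deriv p z * deriv f z + p z * deriv^[2] f z) +
          (deriv q z * f z + q z * deriv f z)))
        (-(((deriv^[2] p y * deriv f y + deriv p y * deriv^[2] f y) +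
           (deriv p y * deriv^[2] f y + p y * deriv^[3] f y)) +
          ((deriv^[2] q y * f y + deriv q y * deriv f y) +
           (deriv q y * deriv f y + q y * deriv^[2] f y)))) y :=
      (((Hp1.mul Hf1).add ((HD Dp0 hy).mul Hf2)).add
        ((Hq1.mul (HD Df0 hy)).add ((HD Dq0 hy).mul Hf1))).neg
    rw [if4, hev.deriv_eq]
    exact H.deriv
  -- the main identity
  have key : ∀ x ∈ Set.Ioo a b,
      deriv (w f) x + p x * w f x =
        (deriv p x * deriv f x + deriv q x * f x) *
          ((deriv^[2] p x + deriv q x) * deriv f x * f x + deriv^[2] q x * (f x) ^ 2 +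
            deriv p x * (deriv f x) ^ 2) - deriv A x * v f x := by
    intro x hx
    have Hp : HasDerivAt p (deriv p x) x := HD Dp0 hx
    have Hq : HasDerivAt q (deriv q x) x := HD Dq0 hx
    have Hf0 : HasDerivAt f (deriv f x) x := HD Df0 hx
    have Hp1 : HasDerivAt (deriv p) (deriv^[2] p x) x := by rw [ip2]; exact HD Dp1 hx
    have Hq1 : HasDerivAt (deriv q) (deriv^[2] q x) x := by rw [iq2]; exact HD Dq1 hx
    have Hf1 : HasDerivAt (deriv f) (deriv^[2] f x) x := by rw [if2]; exact HD Df1 hx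
    have Hp2 : HasDerivAt (deriv^[2] p) (deriv^[3] p x) x := by rw [ip3]; exact HD Dp2 hx
    have Hq2 : HasDerivAt (deriv^[2] q) (deriv^[3] q x) x := by rw [iq3]; exact HD Dq2 hx
    have Hf2 : HasDerivAt (deriv^[2] f) (deriv^[3] f x) x := by rw [if3]; exact HD Df2 hx
    have Hf3 : HasDerivAt (deriv^[3] f) (deriv^[4] f x) x := by rw [if4]; exact HD Df3 hx
    have Hf4 : HasDerivAt (deriv^[4] f) (deriv (deriv^[4] f) x) x := HD Df4 hx
    -- derivative of A
    have HA : HasDerivAt A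
        (((deriv^[3] p x - (deriv^[2] p x * p x + deriv p x * deriv p x)) + 2 * deriv^[2] q x) * deriv f x +
          (deriv^[2] p x - deriv p x * p x + 2 * deriv q x) * deriv^[2] f x +
         ((((-2 * deriv^[2] p x) * q x + (-2 * deriv p x) * deriv q x) + deriv^[3] q x +
            (deriv p x * deriv q x + p x * deriv^[2] q x)) * f x +
          (-2 * deriv p x * q x + deriv^[2] q x + p x * deriv q x) * deriv f x)) x := by
      rw [hA]
      exact (((Hp2.sub (Hp1.mul Hp)).add (Hq1.const_mul 2)).mul Hf1).add
        (((((Hp1.const_mul (-2)).mul Hq).add Hq2).add (Hp.mul Hq1)).mul Hf0)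
    -- w f as explicit function
    have hw : w f = fun y =>
        deriv^[2] f y * (deriv^[2] f y * deriv^[2] f y - deriv f y * deriv^[3] f y) -
          deriv f y * (deriv^[3] f y * deriv^[2] f y - deriv f y * deriv^[4] f y) +
          f y * (deriv^[3] f y * deriv^[3] f y - deriv^[2] f y * deriv^[4] f y) := by
      funext y
      simp [w, Matrix.det_fin_three]
      ring
    have HW : HasDerivAt (w f)
        ((deriv^[3] f x * (deriv^[2] f x * deriv^[2] f x - deriv f x * deriv^[3] f x) +
            deriv^[2] f x * ((deriv^[3] f x * deriv^[2] f x + deriv^[2] f x * deriv^[3] f x) -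
              (deriv^[2] f x * deriv^[3] f x + deriv f x * deriv^[4] f x))) -
          (deriv^[2] f x * (deriv^[3] f x * deriv^[2] f x - deriv f x * deriv^[4] f x) +
            deriv f x * ((deriv^[4] f x * deriv^[2] f x + deriv^[3] f x * deriv^[3] f x) -
              (deriv^[2] f x * deriv^[4] f x + deriv f x * deriv (deriv^[4] f) x))) +
          (deriv f x * (deriv^[3] f x * deriv^[3] f x - deriv^[2] f x * deriv^[4] f x) +
            f x * ((deriv^[4] f x * deriv^[3] f x + deriv^[3] f x * deriv^[4] f x) -
              (deriv^[3] f x * deriv^[4] f x + deriv^[2] f x * deriv (deriv^[4] f) x)))) x := by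
      rw [hw]
      exact ((Hf2.mul ((Hf2.mul Hf2).sub (Hf1.mul Hf3))).sub
        (Hf1.mul ((Hf3.mul Hf2).sub (Hf1.mul Hf4)))).add
        (Hf0.mul ((Hf3.mul Hf3).sub (Hf2.mul Hf4)))
    -- fifth derivative value
    have hev4 : deriv^[4] f =ᶠ[nhds x] (fun z =>
        -(((deriv^[2] p z * deriv f z + deriv p z * deriv^[2] f z) +
           (deriv p z * deriv^[2] f z + p z * deriv^[3] f z)) +
          ((deriv^[2] q z * f z + deriv q z * deriv f z) +
           (deriv q z * deriv f z + q z * deriv^[2] f z)))) :=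
      Filter.eventuallyEq_of_mem (hs.mem_nhds hx) (fun z hz => h4 z hz)
    have H5 : HasDerivAt (fun z =>
        -(((deriv^[2] p z * deriv f z + deriv p z * deriv^[2] f z) +
           (deriv p z * deriv^[2] f z + p z * deriv^[3] f z)) +
          ((deriv^[2] q z * f z + deriv q z * deriv f z) +
           (deriv q z * deriv f z + q z * deriv^[2] f z))))
        (-((((deriv^[3] p x * deriv f x + deriv^[2] p x * deriv^[2] f x) +
             (deriv^[2] p x * deriv^[2] f x + deriv p x * deriv^[3] f x)) +
            ((deriv^[2] p x * deriv^[2] f x + deriv p x * deriv^[3] f x) +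
             (deriv p x * deriv^[3] f x + p x * deriv^[4] f x))) +
           (((deriv^[3] q x * f x + deriv^[2] q x * deriv f x) +
             (deriv^[2] q x * deriv f x + deriv q x * deriv^[2] f x)) +
            ((deriv^[2] q x * deriv f x + deriv q x * deriv^[2] f x) +
             (deriv q x * deriv^[2] f x + q x * deriv^[3] f x))))) x :=
      ((((Hp2.mul Hf1).add (Hp1.mul Hf2)).add ((Hp1.mul Hf2).add (Hp.mul Hf3))).add
        (((Hq2.mul Hf0).add (Hq1.mul Hf1)).add ((Hq1.mul Hf1).add (Hq.mul Hf2)))).neg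
    have e5 : deriv (deriv^[4] f) x =
        -((((deriv^[3] p x * deriv f x + deriv^[2] p x * deriv^[2] f x) +
             (deriv^[2] p x * deriv^[2] f x + deriv p x * deriv^[3] f x)) +
            ((deriv^[2] p x * deriv^[2] f x + deriv p x * deriv^[3] f x) +
             (deriv p x * deriv^[3] f x + p x * deriv^[4] f x))) +
           (((deriv^[3] q x * f x + deriv^[2] q x * deriv f x) +
             (deriv^[2] q x * deriv f x + deriv q x * deriv^[2] f x)) +
            ((deriv^[2] q x * deriv f x + deriv q x * deriv^[2] f x) +
             (deriv q x * deriv^[2] f x + q x * deriv^[3] f x)))) := by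
      rw [hev4.deriv_eq]; exact H5.deriv
    have hwx : w f x =
        deriv^[2] f x * (deriv^[2] f x * deriv^[2] f x - deriv f x * deriv^[3] f x) -
          deriv f x * (deriv^[3] f x * deriv^[2] f x - deriv f x * deriv^[4] f x) +
          f x * (deriv^[3] f x * deriv^[3] f x - deriv^[2] f x * deriv^[4] f x) := by
      rw [hw]
    rw [HW.deriv, HA.deriv, hwx, v, e5, h4 x hx, h3 x hx, h2 x hx]
    ring
  refine ⟨key, fun hq0 x hx => ?_⟩
  have hq2 : deriv^[2] q x = 0 := by
    have hev : deriv q =ᶠ[nhds x] (fun _ => (0:ℝ)) :=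
      Filter.eventuallyEq_of_mem (hs.mem_nhds hx) (fun z hz => hq0 z hz)
    rw [iq2, hev.deriv_eq, deriv_const]
  rw [key x hx, hq0 x hx, hq2]
  ring
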